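/- A smallest-order non-solvable finite POEC group must be perfect. -/

import Mathlib

def POEC (G : Type*) [Group G] : Prop :=
  ∀ x y : G, (orderOf x).Prime → (orderOf y).Prime → Commute x y

lemma poec_subgroup {G : Type*} [Group G] (h : POEC G) (K : Subgroup G) : POEC K := by
  intro x y hx hy
  have := h x y (by rw [Subgroup.orderOf_coe]; exact hx) (by rw [Subgroup.orderOf_coe]; exact hy)
  exact Subtype.ext this

lemma poec_mulEquiv {G H : Type*} [Group G] [Group H] (e : G ≃* H) (h : POEC G) : POEC H := by
  intro x y hx hy
  have := h (e.symm x) (e.symm y) (by rwa [MulEquiv.orderOf_eq]) (by rwa [MulEquiv.orderOf_eq])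
  have := congrArg e (this : _ * _ = _ * _)
  simpa [Commute, SemiconjBy, map_mul] using this

theorem stmt_14 {G : Type*} [Group G] [Finite G] (h : POEC G)
    (hns : ¬ IsSolvable G)
    (hmin : ∀ (H : Type) [Group H] [Finite H],
      POEC H → Nat.card H < Nat.card G → IsSolvable H) :
    commutator G = ⊤ := by
  by_contra hK
  have hlt : commutator G < ⊤ := lt_of_le_of_ne le_top hK
  have hcard : Nat.card (commutator G) < Nat.card G := by
    calc Nat.card (commutator G) = ((commutator G : Subgroup G) : Set G).ncard :=
          Nat.card_coe_set_eq _
      _ < (Set.univ : Set G).ncard := by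
          apply Set.ncard_lt_ncard _ Set.finite_univ
          rw [← Subgroup.coe_top]
          exact SetLike.coe_ssubset_coe.mpr hlt
      _ = Nat.card G := Set.ncard_univ G
  -- transfer commutator G to a Type-0 group via Shrink
  let K := Shrink.{0} (commutator G)
  let me : K ≃* (commutator G) := Shrink.mulEquiv
  haveI : Finite K := Finite.of_equiv _ me.toEquiv.symm
  have hpoec : POEC K := poec_mulEquiv me.symm (poec_subgroup h _)
  have hcardK : Nat.card K < Nat.card G := by
    rwa [Nat.card_congr me.toEquiv]
  haveI : Group.IsSolvable K := hmin K hpoec hcardK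
  haveI : Group.IsSolvable (commutator G) :=
    solvable_of_surjective (f := me.toMonoidHom) me.surjective
  haveI : Group.IsSolvable (G ⧸ commutator G) := inferInstanceAs (Group.IsSolvable (Abelianization G))
  exact hns (solvable_of_ker_le_range (commutator G).subtype (QuotientGroup.mk' (commutator G))
    (by rw [QuotientGroup.ker_mk', Subgroup.range_subtype]))
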